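/- For even n ≥ 6, the Füredi–Palásti configuration L_n of n real lines L_i = L_{i, n/2 - 2i}, i = 0,...,n-1 (indices mod n), has exactly 1 + ⌊n(n-3)/6⌋ triple points, i.e., points where exactly three of the configuration lines meet. -/

import Mathlib

noncomputable section

/-- The point `P_m = ξ^m` on the unit circle, `ξ = exp(2πi/n)`, identifying `ℝ²` with `ℂ`. -/
def pt (n : ℕ) (m : ℤ) : ℂ := Complex.exp (2 * Real.pi * Complex.I * m / n)

/-- Direction of the line `L_{m,k}` (tangent direction at `P_m` when `P_m = P_k`). -/
def dirL (n : ℕ) (m k : ℤ) : ℂ :=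
  if pt n m = pt n k then Complex.I * pt n m else pt n k - pt n m

/-- The real line `L_{m,k}` through `P_m` and `P_k` (tangent to the unit circle at `P_m` when
`P_m = P_k`), as a subset of `ℂ ≅ ℝ²`. -/
def lineL (n : ℕ) (m k : ℤ) : Set ℂ :=
  {z | ∃ t : ℝ, z = pt n m + (t : ℂ) * dirL n m k}

/-- The `i`-th line `L_i = L_{i, n/2 - 2i}` of the Füredi–Palásti configuration. -/
def FPline (n : ℕ) (i : ℤ) : Set ℂ := lineL n i ((n : ℤ) / 2 - 2 * i)

lemma pt_ne_zero (n : ℕ) (m : ℤ) : pt n m ≠ 0 := Complex.exp_ne_zero _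

lemma pt_mul (n : ℕ) (a b : ℤ) : pt n (a + b) = pt n a * pt n b := by
  rw [pt, pt, pt, ← Complex.exp_add]; congr 1; push_cast; ring

lemma pt_zero (n : ℕ) : pt n 0 = 1 := by simp [pt]

lemma pt_inv_mul (n : ℕ) (m : ℤ) : pt n m * pt n (-m) = 1 := by
  rw [← pt_mul]; simp [pt_zero]

lemma pt_neg (n : ℕ) (m : ℤ) : pt n (-m) = (pt n m)⁻¹ :=
  eq_inv_of_mul_eq_one_left (by rw [mul_comm]; exact pt_inv_mul n m)

lemma pt_conj (n : ℕ) (m : ℤ) : (starRingEnd ℂ) (pt n m) = pt n (-m) := by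
  rw [pt, pt, ← Complex.exp_conj]
  congr 1
  simp only [map_div₀, map_mul, Complex.conj_I, Complex.conj_ofReal, map_ofNat,
    map_intCast, map_natCast]
  push_cast; ring

lemma pt_eq_one_iff (n : ℕ) (hn : n ≠ 0) (m : ℤ) : pt n m = 1 ↔ (n:ℤ) ∣ m := by
  have hπ : (Real.pi : ℂ) ≠ 0 := Complex.ofReal_ne_zero.mpr Real.pi_ne_zero
  have hn' : (n:ℂ) ≠ 0 := Nat.cast_ne_zero.mpr hn
  rw [pt, Complex.exp_eq_one_iff]
  constructor
  · rintro ⟨k, hk⟩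
    refine ⟨k, ?_⟩
    have h2 : (m : ℂ) = n * k := by
      rw [div_eq_iff hn'] at hk
      have h3 : (2 * (Real.pi:ℂ) * Complex.I) * m = (2 * (Real.pi:ℂ) * Complex.I) * (n * k) := by
        linear_combination hk
      exact mul_left_cancel₀ (by simp [hπ, Complex.I_ne_zero]) h3
    exact_mod_cast h2
  · rintro ⟨k, hk⟩
    refine ⟨k, ?_⟩
    rw [hk]; push_cast; field_simp

lemma pt_eq_iff (n : ℕ) (hn : n ≠ 0) (a b : ℤ) : pt n a = pt n b ↔ (n:ℤ) ∣ a - b := by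
  rw [← pt_eq_one_iff n hn]
  constructor
  · intro h
    have : pt n (a - b) * pt n b = 1 * pt n b := by
      rw [← pt_mul, sub_add_cancel, h, one_mul]
    exact mul_right_cancel₀ (pt_ne_zero n b) this
  · intro h
    have := congrArg (· * pt n b) h
    simpa [← pt_mul, sub_add_cancel] using this

lemma exists_real_param (p d z : ℂ) (hd : d ≠ 0)
    (hkey : (starRingEnd ℂ) ((z - p)/d) = (z - p)/d) : ∃ t : ℝ, z = p + (t:ℂ) * d := by
  have h := Complex.conj_eq_iff_re.mp hkey
  refine ⟨((z - p)/d).re, ?_⟩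
  rw [h]; field_simp; ring

lemma mem_lineL_iff (n : ℕ) (m k : ℤ) (z : ℂ) :
    z ∈ lineL n m k ↔ z + pt n (m + k) * (starRingEnd ℂ) z = pt n m + pt n k := by
  have ha : pt n m ≠ 0 := pt_ne_zero n m
  have hb : pt n k ≠ 0 := pt_ne_zero n k
  have hmk : pt n (m + k) = pt n m * pt n k := pt_mul n m k
  have hcm : (starRingEnd ℂ) (pt n m) = (pt n m)⁻¹ := by rw [pt_conj, pt_neg]
  have hck : (starRingEnd ℂ) (pt n k) = (pt n k)⁻¹ := by rw [pt_conj, pt_neg]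
  constructor
  · rintro ⟨t, rfl⟩
    rw [dirL]
    split_ifs with h
    · simp only [map_add, map_mul, hcm, Complex.conj_ofReal, Complex.conj_I, hmk, ← h]
      field_simp
      ring
    · simp only [map_add, map_mul, map_sub, hcm, hck, Complex.conj_ofReal, hmk]
      field_simp
      ring
  · intro h
    have hz : (starRingEnd ℂ) z = (pt n m + pt n k - z) / (pt n m * pt n k) := by
      rw [eq_div_iff (mul_ne_zero ha hb)]
      linear_combination h - (starRingEnd ℂ) z * hmk
    by_cases h' : pt n m = pt n k
    · have hd : dirL n m k = Complex.I * pt n m := if_pos h'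
      have hex : ∃ t : ℝ, z = pt n m + (t:ℂ) * (Complex.I * pt n m) := by
        refine exists_real_param _ _ _ (mul_ne_zero Complex.I_ne_zero ha) ?_
        rw [map_div₀, map_sub, hcm, hz, map_mul, Complex.conj_I, hcm]
        rw [div_eq_div_iff (by simp [Complex.I_ne_zero, ha]) (mul_ne_zero Complex.I_ne_zero ha)]
        field_simp
        rw [← h']; ring
      obtain ⟨t, ht⟩ := hex
      exact ⟨t, by rw [ht, hd]⟩
    · have hd : dirL n m k = pt n k - pt n m := if_neg h'
      have hdne : pt n k - pt n m ≠ 0 := sub_ne_zero.mpr (fun hh => h' hh.symm)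
      have hcdne : (pt n k)⁻¹ - (pt n m)⁻¹ ≠ 0 := by
        intro hh
        apply h'
        have := sub_eq_zero.mp hh
        exact (inv_injective this).symm
      have hex : ∃ t : ℝ, z = pt n m + (t:ℂ) * (pt n k - pt n m) := by
        refine exists_real_param _ _ _ hdne ?_
        rw [map_div₀, map_sub, hcm, hz, map_sub, hcm, hck]
        rw [div_eq_div_iff hcdne hdne]
        field_simp
        ring
      obtain ⟨t, ht⟩ := hex
      exact ⟨t, by rw [ht, hd]⟩

lemma pt_half (n : ℕ) (hn : n ≠ 0) (hne : Even n) : pt n ((n:ℤ)/2) = -1 := by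
  obtain ⟨m, hm⟩ := hne
  have hm0 : m ≠ 0 := by omega
  have hmc : (m:ℂ) ≠ 0 := Nat.cast_ne_zero.mpr hm0
  have h1 : ((n:ℤ)/2 : ℤ) = (m:ℤ) := by omega
  rw [pt, h1]
  have h2 : 2 * (Real.pi:ℂ) * Complex.I * (m:ℤ) / (n:ℕ) = (Real.pi:ℂ) * Complex.I := by
    have : ((n:ℕ):ℂ) = 2 * m := by push_cast [hm]; ring
    rw [this]
    push_cast
    field_simp
  rw [h2, Complex.exp_pi_mul_I]

lemma mem_FPline_iff (n : ℕ) (hn : n ≠ 0) (hne : Even n) (i : ℤ) (z : ℂ) :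
    z ∈ FPline n i ↔
      z - (pt n i)⁻¹ * (starRingEnd ℂ) z = pt n i - ((pt n i)^2)⁻¹ := by
  rw [FPline, mem_lineL_iff]
  have h1 : pt n (i + ((n:ℤ)/2 - 2*i)) = -(pt n i)⁻¹ := by
    rw [show i + ((n:ℤ)/2 - 2*i) = (n:ℤ)/2 + (-i) from by ring, pt_mul, pt_half n hn hne,
      pt_neg]
    ring
  have h2 : pt n ((n:ℤ)/2 - 2*i) = -((pt n i)^2)⁻¹ := by
    rw [show (n:ℤ)/2 - 2*i = (n:ℤ)/2 + (-(i+i)) from by ring, pt_mul, pt_half n hn hne,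
      pt_neg, pt_mul]
    rw [sq]
    ring
  rw [h1, h2]
  constructor <;> intro h <;> linear_combination h

lemma quad_swap (a b c d : ℂ) (hs : a + b = c + d) (hp : a * b = c * d) (h : a ≠ c) :
    a = d := by
  have h0 : (c - a) * (c - b) = 0 := by linear_combination (-c) * hs + hp
  rcases mul_eq_zero.mp h0 with h1 | h1
  · exact absurd (show a = c by linear_combination -h1) h
  · linear_combination hs + h1

lemma two_lines (n : ℕ) (hn : n ≠ 0) (hne : Even n) (i j : ℤ) (hij : ¬ ((n:ℤ) ∣ i - j))
    (z : ℂ) (hi : z ∈ FPline n i) (hj : z ∈ FPline n j) :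
    z = pt n i + pt n j + (pt n i * pt n j)⁻¹ := by
  set a := pt n i with ha'
  set b := pt n j with hb'
  have ha : a ≠ 0 := pt_ne_zero n i
  have hb : b ≠ 0 := pt_ne_zero n j
  have hab : a ≠ b := fun h => hij ((pt_eq_iff n hn i j).mp h)
  rw [mem_FPline_iff n hn hne] at hi hj
  set C := (starRingEnd ℂ) z with hC'
  have ei2 : a^2 * z - a * C = a^3 - 1 := by
    have hinv : a * a⁻¹ = 1 := mul_inv_cancel₀ ha
    rw [← ha'] at hi
    linear_combination a^2 * hi + (a*C - a*a⁻¹ - 1) * hinv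
  have ej2 : b^2 * z - b * C = b^3 - 1 := by
    have hinv : b * b⁻¹ = 1 := mul_inv_cancel₀ hb
    rw [← hb'] at hj
    linear_combination b^2 * hj + (b*C - b*b⁻¹ - 1) * hinv
  have hne2 : a * b * (a - b) ≠ 0 := mul_ne_zero (mul_ne_zero ha hb) (sub_ne_zero.mpr hab)
  have h5 : a + b + (a*b)⁻¹ = ((a*b*(a-b))*(a+b) + (a-b))/(a*b*(a-b)) := by
    field_simp
  rw [h5, eq_div_iff hne2]
  linear_combination b * ei2 - a * ej2

lemma triple_mem (n : ℕ) (hn : n ≠ 0) (hne : Even n) (i j k : ℤ) (hsum : (n:ℤ) ∣ i + j + k) :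
    pt n i + pt n j + pt n k ∈ FPline n i := by
  rw [mem_FPline_iff n hn hne]
  have hk : pt n k = (pt n i * pt n j)⁻¹ := by
    have hd : (n:ℤ) ∣ k - (-(i+j)) := by
      have h6 : k - (-(i+j)) = i + j + k := by ring
      rwa [h6]
    rw [show (pt n i * pt n j)⁻¹ = pt n (-(i+j)) from by rw [pt_neg, pt_mul]]
    exact (pt_eq_iff n hn k (-(i+j))).mpr hd
  have ha : pt n i ≠ 0 := pt_ne_zero n i
  have hb : pt n j ≠ 0 := pt_ne_zero n j
  simp only [map_add, pt_conj, pt_neg]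
  rw [hk]
  field_simp
  ring

lemma sum3 {n : ℕ} {a b c : ZMod n} (hab : a ≠ b) (hac : a ≠ c) (hbc : b ≠ c) :
    ({a, b, c} : Finset (ZMod n)).sum id = a + b + c := by
  rw [Finset.sum_insert (by simp [hab, hac]), Finset.sum_insert (by simp [hbc]),
    Finset.sum_singleton]
  simp [add_assoc]

lemma card3 {n : ℕ} {a b c : ZMod n} (hab : a ≠ b) (hac : a ≠ c) (hbc : b ≠ c) :
    ({a, b, c} : Finset (ZMod n)).card = 3 :=
  Finset.card_eq_three.mpr ⟨a, b, c, hab, hac, hbc, rfl⟩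

lemma torsion_card (n : ℕ) (hn : 6 ≤ n) [NeZero n] :
    ((Finset.univ : Finset (ZMod n)).filter (fun a => 3 * a = 0)).card
      = if 3 ∣ n then 3 else 1 := by
  split_ifs with h3
  · obtain ⟨m, hm⟩ := h3
    subst hm
    set n := 3 * m with hn3
    have hm2 : 2 ≤ m := by omega
    have key : ((Finset.univ : Finset (ZMod n)).filter (fun a => 3 * a = 0))
        = {(0 : ZMod n), ((m : ℕ) : ZMod n), ((2*m : ℕ) : ZMod n)} := by
      ext a
      simp only [Finset.mem_filter, Finset.mem_univ, true_and, Finset.mem_insert,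
        Finset.mem_singleton]
      constructor
      · intro h
        have hval : ((3 * a.val : ℕ) : ZMod n) = 0 := by
          push_cast
          rw [ZMod.natCast_rightInverse a]
          exact h
        have hdvd : 3 * m ∣ 3 * a.val := (ZMod.natCast_eq_zero_iff _ _).mp hval
        have hdm : m ∣ a.val := (mul_dvd_mul_iff_left (by norm_num : (3:ℕ) ≠ 0)).mp hdvd
        obtain ⟨k, hk⟩ := hdm
        have hlt : a.val < 3 * m := ZMod.val_lt a
        have hk3 : k < 3 := by nlinarith [hk ▸ hlt]
        have ha : a = ((a.val : ℕ) : ZMod n) := (ZMod.natCast_rightInverse a).symm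
        interval_cases k
        · left; rw [ha, hk]; simp
        · right; left; rw [ha, hk]; congr 1; ring
        · right; right; rw [ha, hk]; congr 1; ring
      · rintro (rfl | rfl | rfl)
        · ring
        · rw [show (3 : ZMod n) * (m : ℕ) = ((3 * m : ℕ) : ZMod n) from by push_cast; ring,
            show ((3 * m : ℕ) : ZMod n) = ((n : ℕ) : ZMod n) from rfl, ZMod.natCast_self]
        · rw [show (3 : ZMod n) * ((2*m : ℕ) : ZMod n) = ((3 * m : ℕ) : ZMod n) * 2 from by
            push_cast; ring, show ((3 * m : ℕ) : ZMod n) = ((n : ℕ) : ZMod n) from rfl,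
            ZMod.natCast_self, zero_mul]
    rw [key]
    have h1 : ((m:ℕ) : ZMod n).val = m := ZMod.val_cast_of_lt (by omega)
    have h2 : ((2*m:ℕ) : ZMod n).val = 2*m := ZMod.val_cast_of_lt (by omega)
    have d12 : (0 : ZMod n) ≠ ((m:ℕ) : ZMod n) := by
      intro h; have h' := congrArg ZMod.val h; rw [ZMod.val_zero, h1] at h'; omega
    have d13 : (0 : ZMod n) ≠ ((2*m:ℕ) : ZMod n) := by
      intro h; have h' := congrArg ZMod.val h; rw [ZMod.val_zero, h2] at h'; omega
    have d23 : ((m:ℕ) : ZMod n) ≠ ((2*m:ℕ) : ZMod n) := by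
      intro h; have h' := congrArg ZMod.val h; rw [h1, h2] at h'; omega
    exact card3 d12 d13 d23
  · have hu : IsUnit (3 : ZMod n) := by
      rw [show (3 : ZMod n) = ((3:ℕ) : ZMod n) from by push_cast; ring]
      exact (ZMod.isUnit_iff_coprime 3 n).mpr
        ((Nat.Prime.coprime_iff_not_dvd (by norm_num)).mpr h3)
    have key : ((Finset.univ : Finset (ZMod n)).filter (fun a => 3 * a = 0))
        = {(0 : ZMod n)} := by
      ext a
      simp only [Finset.mem_filter, Finset.mem_univ, true_and, Finset.mem_singleton]
      constructor
      · intro h; exact (hu.mul_right_eq_zero).mp h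
      · rintro rfl; ring
    rw [key, Finset.card_singleton]

lemma six_mul_count (n : ℕ) (hn : 6 ≤ n) [NeZero n] :
    6 * (((Finset.univ : Finset (ZMod n)).powersetCard 3).filter
        (fun s => s.sum id = 0)).card + 3 * n =
      n * n + 2 * (((Finset.univ : Finset (ZMod n)).filter (fun a => 3 * a = 0)).card) := by
  classical
  set T := ((Finset.univ : Finset (ZMod n)).powersetCard 3).filter (fun s => s.sum id = 0)
    with hT
  set cond : ZMod n × ZMod n → Prop :=
    fun p => p.1 ≠ p.2 ∧ p.1 ≠ -(p.1+p.2) ∧ p.2 ≠ -(p.1+p.2) with hcond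
  set P := (Finset.univ : Finset (ZMod n × ZMod n)).filter cond with hP
  set f : ZMod n × ZMod n → Finset (ZMod n) := fun p => {p.1, p.2, -(p.1+p.2)} with hf
  -- each fiber map lands in T
  have hmap : ∀ p ∈ P, f p ∈ T := by
    rintro ⟨x, y⟩ hp
    simp only [hP, Finset.mem_filter, hcond] at hp
    obtain ⟨-, h1, h2, h3⟩ := hp
    simp only [hT, Finset.mem_filter, Finset.mem_powersetCard]
    refine ⟨⟨Finset.subset_univ _, card3 h1 h2 h3⟩, ?_⟩
    rw [hf]
    rw [sum3 h1 h2 h3]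
    ring
  have hfib : ∀ s ∈ T, (P.filter (fun p => f p = s)).card = 6 := by
    intro s hs
    simp only [hT, Finset.mem_filter, Finset.mem_powersetCard] at hs
    obtain ⟨⟨-, hcard⟩, hsum⟩ := hs
    obtain ⟨a, b, c, hab, hac, hbc, rfl⟩ := Finset.card_eq_three.mp hcard
    rw [sum3 hab hac hbc] at hsum
    have hkey : P.filter (fun p => f p = ({a,b,c} : Finset (ZMod n)))
        = ({a,b,c} : Finset (ZMod n)).offDiag := by
      ext ⟨x, y⟩
      simp only [Finset.mem_filter, Finset.mem_offDiag, hP, Finset.mem_univ, true_and,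
        hcond, hf]
      constructor
      · rintro ⟨⟨h1, h2, h3⟩, he⟩
        refine ⟨?_, ?_, h1⟩
        · rw [← he]; simp
        · rw [← he]; simp
      · rintro ⟨hx, hy, hxy⟩
        simp only [Finset.mem_insert, Finset.mem_singleton] at hx hy
        have hiff : ∀ u v w : ZMod n, u + v + w = 0 → u ≠ v → u ≠ w → v ≠ w →
            ({u, v, -(u+v)} : Finset (ZMod n)) = {u, v, w} := by
          intro u v w h0 _ _ _
          have : -(u+v) = w := by linear_combination -h0
          rw [this]
        rcases hx with rfl | rfl | rfl <;> rcases hy with rfl | rfl | rfl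
        · exact absurd rfl hxy
        · -- x = a, y = b
          have h3 : -(x+y) = c := by linear_combination -hsum
          refine ⟨⟨hxy, ?_, ?_⟩, by rw [h3]⟩
          · rw [h3]; exact hac
          · rw [h3]; exact hbc
        · -- x = a, y = c
          have h3 : -(x+y) = b := by linear_combination -hsum
          refine ⟨⟨hxy, ?_, ?_⟩, ?_⟩
          · rw [h3]; exact hab
          · rw [h3]; exact (Ne.symm hbc)
          · rw [h3]
            ext u; simp only [Finset.mem_insert, Finset.mem_singleton]; tauto
        · -- x = b, y = a
          have h3 : -(x+y) = c := by linear_combination -hsum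
          refine ⟨⟨hxy, ?_, ?_⟩, ?_⟩
          · rw [h3]; exact hbc
          · rw [h3]; exact hac
          · rw [h3]
            ext u; simp only [Finset.mem_insert, Finset.mem_singleton]; tauto
        · exact absurd rfl hxy
        · -- x = b, y = c
          have h3 : -(x+y) = a := by linear_combination -hsum
          refine ⟨⟨hxy, ?_, ?_⟩, ?_⟩
          · rw [h3]; exact (Ne.symm hab)
          · rw [h3]; exact (Ne.symm hac)
          · rw [h3]
            ext u; simp only [Finset.mem_insert, Finset.mem_singleton]; tauto
        · -- x = c, y = a
          have h3 : -(x+y) = b := by linear_combination -hsum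
          refine ⟨⟨hxy, ?_, ?_⟩, ?_⟩
          · rw [h3]; exact (Ne.symm hbc)
          · rw [h3]; exact hab
          · rw [h3]
            ext u; simp only [Finset.mem_insert, Finset.mem_singleton]; tauto
        · -- x = c, y = b
          have h3 : -(x+y) = a := by linear_combination -hsum
          refine ⟨⟨hxy, ?_, ?_⟩, ?_⟩
          · rw [h3]; exact (Ne.symm hac)
          · rw [h3]; exact (Ne.symm hab)
          · rw [h3]
            ext u; simp only [Finset.mem_insert, Finset.mem_singleton]; tauto
        · exact absurd rfl hxy
    rw [hkey, Finset.offDiag_card, card3 hab hac hbc]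
  have hPcard : P.card = 6 * T.card := by
    rw [Finset.card_eq_sum_card_fiberwise hmap]
    rw [Finset.sum_congr rfl hfib, Finset.sum_const, smul_eq_mul, mul_comm]
  set B := (Finset.univ : Finset (ZMod n × ZMod n)).filter (fun p => ¬ cond p) with hB
  have hPB : P.card + B.card = n * n := by
    rw [hP, hB, Finset.card_filter_add_card_filter_not]
    simp [Finset.card_univ, ZMod.card]
  set B1 := (Finset.univ : Finset (ZMod n × ZMod n)).filter (fun p => p.1 = p.2) with hB1
  set B2 := (Finset.univ : Finset (ZMod n × ZMod n)).filter
    (fun p => p.1 = -(p.1+p.2)) with hB2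
  set B3 := (Finset.univ : Finset (ZMod n × ZMod n)).filter
    (fun p => p.2 = -(p.1+p.2)) with hB3
  set D := (Finset.univ : Finset (ZMod n)).filter (fun a => 3*a = 0) with hD
  set E := D.image (fun a : ZMod n => (a, a)) with hE
  have hBun : B = (B1 ∪ B2) ∪ B3 := by
    ext p
    simp only [hB, hB1, hB2, hB3, hcond, Finset.mem_filter, Finset.mem_union,
      Finset.mem_univ, true_and]
    tauto
  have hEcard : E.card = D.card := by
    rw [hE, Finset.card_image_of_injective _ (fun a b h => (Prod.mk.injEq _ _ _ _ ▸ h).1)]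
  have hB1c : B1.card = n := by
    have h : B1 = Finset.univ.image (fun a : ZMod n => (a, a)) := by
      ext ⟨x, y⟩
      simp only [hB1, Finset.mem_filter, Finset.mem_univ, true_and, Finset.mem_image,
        Prod.mk.injEq]
      constructor
      · rintro rfl; exact ⟨x, rfl, rfl⟩
      · rintro ⟨a, rfl, rfl⟩; rfl
    rw [h, Finset.card_image_of_injective _ (fun a b hh => (Prod.mk.injEq _ _ _ _ ▸ hh).1),
      Finset.card_univ, ZMod.card]
  have hB2c : B2.card = n := by
    have h : B2 = Finset.univ.image (fun a : ZMod n => (a, -(2*a))) := by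
      ext ⟨x, y⟩
      simp only [hB2, Finset.mem_filter, Finset.mem_univ, true_and, Finset.mem_image,
        Prod.mk.injEq]
      constructor
      · intro hh; exact ⟨x, rfl, by linear_combination -hh⟩
      · rintro ⟨a, rfl, rfl⟩; ring
    rw [h, Finset.card_image_of_injective _ (fun a b hh => (Prod.mk.injEq _ _ _ _ ▸ hh).1),
      Finset.card_univ, ZMod.card]
  have hB3c : B3.card = n := by
    have h : B3 = Finset.univ.image (fun a : ZMod n => (-(2*a), a)) := by
      ext ⟨x, y⟩
      simp only [hB3, Finset.mem_filter, Finset.mem_univ, true_and, Finset.mem_image,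
        Prod.mk.injEq]
      constructor
      · intro hh; exact ⟨y, by linear_combination -hh, rfl⟩
      · rintro ⟨a, rfl, rfl⟩; ring
    rw [h, Finset.card_image_of_injective _ (fun a b hh => (Prod.mk.injEq _ _ _ _ ▸ hh).2),
      Finset.card_univ, ZMod.card]
  have h12 : B1 ∩ B2 = E := by
    ext ⟨x, y⟩
    simp only [Finset.mem_inter, hB1, hB2, hE, hD, Finset.mem_filter, Finset.mem_univ,
      true_and, Finset.mem_image, Prod.mk.injEq]
    constructor
    · rintro ⟨rfl, h2⟩
      exact ⟨x, by linear_combination h2, rfl, rfl⟩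
    · rintro ⟨a, ha, rfl, rfl⟩
      exact ⟨rfl, by linear_combination ha⟩
  have h123 : (B1 ∪ B2) ∩ B3 = E := by
    ext ⟨x, y⟩
    simp only [Finset.mem_inter, Finset.mem_union, hB1, hB2, hB3, hE, hD, Finset.mem_filter,
      Finset.mem_univ, true_and, Finset.mem_image, Prod.mk.injEq]
    constructor
    · rintro ⟨h1 | h1, h2⟩
      · rcases h1 with rfl
        exact ⟨x, by linear_combination h2, rfl, rfl⟩
      · have hxy : x = y := by linear_combination h1 - h2
        rcases hxy with rfl
        exact ⟨x, by linear_combination h1, rfl, rfl⟩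
    · rintro ⟨a, ha, rfl, rfl⟩
      exact ⟨Or.inl rfl, by linear_combination ha⟩
  have c12 : (B1 ∪ B2).card + (B1 ∩ B2).card = B1.card + B2.card :=
    Finset.card_union_add_card_inter _ _
  have c123 : ((B1 ∪ B2) ∪ B3).card + ((B1 ∪ B2) ∩ B3).card = (B1 ∪ B2).card + B3.card :=
    Finset.card_union_add_card_inter _ _
  rw [h12, h123] at *
  rw [hBun] at hPB
  omega

lemma count_triples (n : ℕ) (hn : 6 ≤ n) (hne : Even n) [NeZero n] :
    (((Finset.univ : Finset (ZMod n)).powersetCard 3).filter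
      (fun s => s.sum id = 0)).card = 1 + n * (n - 3) / 6 := by
  have h6 := six_mul_count n hn
  have hg := torsion_card n hn
  set T := ((Finset.univ : Finset (ZMod n)).powersetCard 3).filter (fun s => s.sum id = 0)
  set A := n * (n - 3) with hAdef
  have h3 : n - 3 + 3 = n := by omega
  have hA : A + 3 * n = n * n := by
    rw [hAdef, mul_comm 3 n, ← Nat.mul_add, h3]
  have h2 : n % 2 = 0 := Nat.even_iff.mp hne
  by_cases h3d : 3 ∣ n
  · rw [if_pos h3d] at hg
    obtain ⟨t, ht⟩ : 6 ∣ n := by omega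
    have h6d : 6 ∣ A := ⟨t * (n - 3), by rw [hAdef, ht]; ring⟩
    omega
  · rw [if_neg h3d] at hg
    have hn3 : n % 3 ≠ 0 := fun h => h3d (Nat.dvd_of_mod_eq_zero h)
    have hmod : A % 6 = n % 6 * ((n - 3) % 6) % 6 := Nat.mul_mod _ _ _
    have h24 : n % 6 = 2 ∨ n % 6 = 4 := by omega
    have hA4 : A % 6 = 4 := by
      rcases h24 with h | h
      · have h5 : (n - 3) % 6 = 5 := by omega
        rw [h, h5] at hmod; norm_num at hmod; exact hmod
      · have h5 : (n - 3) % 6 = 1 := by omega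
        rw [h, h5] at hmod; norm_num at hmod; exact hmod
    omega

/-- **Füredi–Palásti.** For even `n ≥ 6`, the configuration of the `n` real lines
`L_i = L_{i, n/2-2i}`, `i = 0,…,n-1`, has exactly `1 + ⌊n(n-3)/6⌋` triple points, i.e. points
lying on exactly three of the configuration lines. -/
theorem furedi_palasti_triple_point_count (n : ℕ) (hn : 6 ≤ n) (hne : Even n) :
    {z : ℂ | {i : ℕ | i < n ∧ z ∈ FPline n i}.ncard = 3}.ncard = 1 + n * (n - 3) / 6 := by
  classical
  have hn0 : n ≠ 0 := by omega
  haveI : NeZero n := ⟨hn0⟩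
  -- casting helpers
  have hval_cast : ∀ x : ZMod n, (((x.val : ℕ) : ℤ) : ZMod n) = x := by
    intro x
    simp [ZMod.natCast_val, ZMod.cast_id]
  have hval_cast' : ∀ x : ZMod n, ((x.val : ℕ) : ZMod n) = x := fun x =>
    ZMod.natCast_rightInverse x
  have cast_dvd : ∀ (x : ℤ) (y : ZMod n), ((n:ℤ) ∣ x - (y.val : ℤ)) ↔ (x : ZMod n) = y := by
    intro x y
    rw [← ZMod.intCast_zmod_eq_zero_iff_dvd]
    constructor
    · intro h
      have h2 : ((x - (y.val:ℤ) : ℤ) : ZMod n) = (x : ZMod n) - y := by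
        push_cast
        rw [hval_cast']
      rw [h2, sub_eq_zero] at h
      exact h
    · intro h
      have h2 : ((x - (y.val:ℤ) : ℤ) : ZMod n) = (x : ZMod n) - y := by
        push_cast
        rw [hval_cast']
      rw [h2, h, sub_self]
  have hne_dvd : ∀ x y : ZMod n, x ≠ y → ¬ ((n:ℤ) ∣ ((x.val:ℕ):ℤ) - ((y.val:ℕ):ℤ)) := by
    intro x y hxy hd
    exact hxy (by rw [← hval_cast x]; exact (cast_dvd _ y).mp hd)
  have Φinj : ∀ x y : ZMod n, pt n ((x.val:ℕ):ℤ) = pt n ((y.val:ℕ):ℤ) → x = y := by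
    intro x y h
    have h2 := (cast_dvd ((x.val:ℕ):ℤ) y).mp ((pt_eq_iff n hn0 _ _).mp h)
    rwa [hval_cast] at h2
  have Φinv : ∀ x y : ZMod n,
      (pt n ((x.val:ℕ):ℤ) * pt n ((y.val:ℕ):ℤ))⁻¹ = pt n (((-(x+y)).val : ℕ) : ℤ) := by
    intro x y
    rw [← pt_mul, ← pt_neg]
    refine (pt_eq_iff n hn0 _ _).mpr ?_
    refine (cast_dvd _ _).mpr ?_
    push_cast
    simp only [hval_cast']
  have mem3 : ∀ u v w : ZMod n, u + v + w = 0 →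
      pt n ((u.val:ℕ):ℤ) + pt n ((v.val:ℕ):ℤ) + pt n ((w.val:ℕ):ℤ)
        ∈ FPline n ((u.val:ℕ):ℤ) := by
    intro u v w h
    refine triple_mem n hn0 hne _ _ _ ?_
    refine (ZMod.intCast_zmod_eq_zero_iff_dvd _ n).mp ?_
    push_cast
    rw [hval_cast', hval_cast', hval_cast', h]
  have key : ∀ (a b u : ZMod n) (z : ℂ), a ≠ b → a ≠ u → b ≠ u →
      z ∈ FPline n ((a.val:ℕ):ℤ) → z ∈ FPline n ((b.val:ℕ):ℤ) →
      z ∈ FPline n ((u.val:ℕ):ℤ) → u = -(a+b) := by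
    intro a b u z hab hau hbu hza hzb hzu
    set A := pt n ((a.val:ℕ):ℤ)
    set B := pt n ((b.val:ℕ):ℤ)
    set U := pt n ((u.val:ℕ):ℤ)
    have hA : A ≠ 0 := pt_ne_zero _ _
    have hB : B ≠ 0 := pt_ne_zero _ _
    have hU : U ≠ 0 := pt_ne_zero _ _
    have h1 : z = A + B + (A*B)⁻¹ := two_lines n hn0 hne _ _ (hne_dvd a b hab) z hza hzb
    have h2 : z = A + U + (A*U)⁻¹ := two_lines n hn0 hne _ _ (hne_dvd a u hau) z hza hzu
    have hs : B + (A*B)⁻¹ = U + (A*U)⁻¹ := by linear_combination h2 - h1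
    have hp : B * (A*B)⁻¹ = U * (A*U)⁻¹ := by
      field_simp
    have hBU : B ≠ U := fun h => hbu (Φinj b u h)
    have h3 : B = (A*U)⁻¹ := quad_swap _ _ _ _ hs hp hBU
    rw [Φinv a u] at h3
    have h4 : b = -(a+u) := Φinj _ _ h3
    linear_combination h4
  -- the triple set
  set T := ((Finset.univ : Finset (ZMod n)).powersetCard 3).filter
    (fun s => s.sum id = 0) with hT
  set gS : Finset (ZMod n) → ℂ := fun s => ∑ x ∈ s, pt n ((x.val:ℕ):ℤ) with hgS
  have sumΦ3 : ∀ a b c : ZMod n, a ≠ b → a ≠ c → b ≠ c →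
      gS {a,b,c} = pt n ((a.val:ℕ):ℤ) + pt n ((b.val:ℕ):ℤ) + pt n ((c.val:ℕ):ℤ) := by
    intro a b c hab hac hbc
    show (∑ x ∈ ({a,b,c} : Finset (ZMod n)), pt n ((x.val:ℕ):ℤ)) = _
    rw [Finset.sum_insert (by simp [hab, hac]), Finset.sum_insert (by simp [hbc]),
      Finset.sum_singleton, add_assoc]
  have lines_through : ∀ s ∈ T,
      {i : ℕ | i < n ∧ gS s ∈ FPline n i} = ZMod.val '' (s : Set (ZMod n)) := by
    intro s hs
    rw [hT, Finset.mem_filter, Finset.mem_powersetCard] at hs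
    obtain ⟨⟨-, hcard⟩, hsum0⟩ := hs
    obtain ⟨a, b, c, hab, hac, hbc, rfl⟩ := Finset.card_eq_three.mp hcard
    have hsum : a + b + c = 0 := by rwa [sum3 hab hac hbc] at hsum0
    have hz := sumΦ3 a b c hab hac hbc
    ext i
    simp only [Set.mem_setOf_eq, Set.mem_image, Finset.coe_insert, Set.mem_insert_iff,
      Finset.coe_singleton, Set.mem_singleton_iff]
    constructor
    · rintro ⟨hilt, hline⟩
      set u : ZMod n := (i : ZMod n) with hu'
      have hu : u.val = i := ZMod.val_cast_of_lt hilt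
      by_cases hus : u = a ∨ u = b ∨ u = c
      · rcases hus with rfl | rfl | rfl
        · exact ⟨u, Or.inl rfl, hu⟩
        · exact ⟨u, Or.inr (Or.inl rfl), hu⟩
        · exact ⟨u, Or.inr (Or.inr rfl), hu⟩
      · exfalso
        push_neg at hus
        obtain ⟨hua, hub, huc⟩ := hus
        have hza : gS {a,b,c} ∈ FPline n ((a.val:ℕ):ℤ) := by
          rw [hz]; exact mem3 a b c hsum
        have hzb : gS {a,b,c} ∈ FPline n ((b.val:ℕ):ℤ) := by
          rw [hz, show pt n ((a.val:ℕ):ℤ) + pt n ((b.val:ℕ):ℤ) + pt n ((c.val:ℕ):ℤ)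
            = pt n ((b.val:ℕ):ℤ) + pt n ((a.val:ℕ):ℤ) + pt n ((c.val:ℕ):ℤ) from by ring]
          exact mem3 b a c (by linear_combination hsum)
        have hzu : gS {a,b,c} ∈ FPline n ((u.val:ℕ):ℤ) := by
          rw [hu]; exact hline
        have := key a b u (gS {a,b,c}) hab (fun h => hua h.symm) (fun h => hub h.symm)
          hza hzb hzu
        exact huc (by rw [this]; linear_combination -hsum)
    · rintro ⟨x, hx, rfl⟩
      refine ⟨ZMod.val_lt x, ?_⟩
      rw [hz]
      rcases hx with rfl | rfl | rfl
      · exact mem3 x b c hsum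
      · rw [show pt n ((a.val:ℕ):ℤ) + pt n ((x.val:ℕ):ℤ) + pt n ((c.val:ℕ):ℤ)
            = pt n ((x.val:ℕ):ℤ) + pt n ((a.val:ℕ):ℤ) + pt n ((c.val:ℕ):ℤ) from by ring]
        exact mem3 x a c (by linear_combination hsum)
      · rw [show pt n ((a.val:ℕ):ℤ) + pt n ((b.val:ℕ):ℤ) + pt n ((x.val:ℕ):ℤ)
            = pt n ((x.val:ℕ):ℤ) + pt n ((a.val:ℕ):ℤ) + pt n ((b.val:ℕ):ℤ) from by ring]
        exact mem3 x a b (by linear_combination hsum)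
  have hTcard : ∀ s ∈ T, s.card = 3 := by
    intro s hs
    rw [hT, Finset.mem_filter, Finset.mem_powersetCard] at hs
    exact hs.1.2
  have hinj : Set.InjOn gS (T : Set (Finset (ZMod n))) := by
    intro s hs t ht hst
    have hsub : ∀ u v : Finset (ZMod n), u ∈ T → v ∈ T → gS u = gS v → v ⊆ u := by
      intro u v hu hv huv
      intro x hx
      have h1 : (x.val : ℕ) ∈ {i : ℕ | i < n ∧ gS v ∈ FPline n i} := by
        rw [lines_through v hv]
        exact ⟨x, hx, rfl⟩
      have h2 : (x.val : ℕ) ∈ ZMod.val '' ((u : Set (ZMod n))) := by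
        rw [← lines_through u hu]
        exact ⟨h1.1, huv ▸ h1.2⟩
      obtain ⟨y, hy, hvy⟩ := h2
      rwa [ZMod.val_injective n hvy] at hy
    have h1 := hsub s t (by exact_mod_cast hs) (by exact_mod_cast ht) hst
    have h2 := hsub t s (by exact_mod_cast ht) (by exact_mod_cast hs) hst.symm
    exact Finset.Subset.antisymm h2 h1
  have hSet : {z : ℂ | {i : ℕ | i < n ∧ z ∈ FPline n i}.ncard = 3}
      = gS '' (T : Set (Finset (ZMod n))) := by
    ext z
    simp only [Set.mem_setOf_eq, Set.mem_image, Finset.mem_coe]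
    constructor
    · intro h3
      obtain ⟨p, q, r, hpq, hpr, hqr, hset⟩ := Set.ncard_eq_three.mp h3
      have hmem : ∀ m : ℕ, m ∈ ({p, q, r} : Set ℕ) → m < n ∧ z ∈ FPline n m := by
        intro m hm
        have : m ∈ {i : ℕ | i < n ∧ z ∈ FPline n i} := by rw [hset]; exact hm
        exact this
      obtain ⟨hpn, hzp⟩ := hmem p (Or.inl rfl)
      obtain ⟨hqn, hzq⟩ := hmem q (Or.inr (Or.inl rfl))
      obtain ⟨hrn, hzr⟩ := hmem r (Or.inr (Or.inr rfl))
      set pa : ZMod n := (p : ZMod n) with hpa'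
      set qa : ZMod n := (q : ZMod n) with hqa'
      set ra : ZMod n := (r : ZMod n) with hra'
      have hpv : pa.val = p := ZMod.val_cast_of_lt hpn
      have hqv : qa.val = q := ZMod.val_cast_of_lt hqn
      have hrv : ra.val = r := ZMod.val_cast_of_lt hrn
      have hd1 : pa ≠ qa := fun h => hpq (by rw [← hpv, ← hqv, h])
      have hd2 : pa ≠ ra := fun h => hpr (by rw [← hpv, ← hrv, h])
      have hd3 : qa ≠ ra := fun h => hqr (by rw [← hqv, ← hrv, h])
      have hzp' : z ∈ FPline n ((pa.val:ℕ):ℤ) := by rw [hpv]; exact hzp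
      have hzq' : z ∈ FPline n ((qa.val:ℕ):ℤ) := by rw [hqv]; exact hzq
      have hzr' : z ∈ FPline n ((ra.val:ℕ):ℤ) := by rw [hrv]; exact hzr
      have hkey := key pa qa ra z hd1 hd2 hd3 hzp' hzq' hzr'
      have hsum : pa + qa + ra = 0 := by linear_combination hkey
      refine ⟨{pa, qa, ra}, ?_, ?_⟩
      · rw [hT, Finset.mem_filter, Finset.mem_powersetCard]
        exact ⟨⟨Finset.subset_univ _, card3 hd1 hd2 hd3⟩, by rw [sum3 hd1 hd2 hd3]; exact hsum⟩
      · rw [sumΦ3 pa qa ra hd1 hd2 hd3]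
        have h1 : z = pt n ((pa.val:ℕ):ℤ) + pt n ((qa.val:ℕ):ℤ)
            + (pt n ((pa.val:ℕ):ℤ) * pt n ((qa.val:ℕ):ℤ))⁻¹ :=
          two_lines n hn0 hne _ _ (hne_dvd pa qa hd1) z hzp' hzq'
        rw [Φinv pa qa, show -(pa + qa) = ra from by linear_combination -hkey] at h1
        exact h1.symm
    · rintro ⟨s, hs, rfl⟩
      rw [lines_through s hs,
        Set.ncard_image_of_injOn ((ZMod.val_injective n).injOn),
        Set.ncard_coe_finset]
      exact hTcard s hs
  rw [hSet, Set.ncard_image_of_injOn hinj, Set.ncard_coe_finset]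
  exact count_triples n hn hne

end
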